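/- The Stanley–Reisner ring A = k[u₁,…,u_r,v₁,…,v_r]/(u₁v₁,…,u_rv_r), regarded as a module over the polynomial ring R = k[x₁,…,x_r] via the k-algebra homomorphism sending x_i to u_i − v_i, is a free R-module with basis the images of the 2^r square-free monomials u_I = ∏_{i∈I} u_i, I ⊆ {1,…,r}; in particular A ≅ R^{2^r} as R-modules. -/

import Mathlib

/-- The ideal `(u₁v₁,…,u_rv_r)` of `k[u₁,…,u_r,v₁,…,v_r]`, where the `u`-variables are
indexed by `Sum.inl` and the `v`-variables by `Sum.inr`. -/
noncomputable def srIdeal (k : Type) [Field k] (r : ℕ) :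
    Ideal (MvPolynomial (Fin r ⊕ Fin r) k) :=
  Ideal.span (Set.range fun i : Fin r =>
    MvPolynomial.X (Sum.inl i) * MvPolynomial.X (Sum.inr i))

/-- The Stanley–Reisner ring `A = k[u₁,…,u_r,v₁,…,v_r]/(u₁v₁,…,u_rv_r)`. -/
abbrev SRRing (k : Type) [Field k] (r : ℕ) : Type :=
  MvPolynomial (Fin r ⊕ Fin r) k ⧸ srIdeal k r

/-- The `k`-algebra homomorphism `R = k[x₁,…,x_r] → A` sending `x_i ↦ u_i − v_i`. -/
noncomputable def srStructureMap (k : Type) [Field k] (r : ℕ) :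
    MvPolynomial (Fin r) k →ₐ[k] SRRing k r :=
  MvPolynomial.aeval fun i =>
    Ideal.Quotient.mk (srIdeal k r) (MvPolynomial.X (Sum.inl i)) -
      Ideal.Quotient.mk (srIdeal k r) (MvPolynomial.X (Sum.inr i))

/-- `A` is an `R`-algebra (in particular an `R`-module) via `x_i ↦ u_i − v_i`. -/
noncomputable instance (k : Type) [Field k] (r : ℕ) :
    Algebra (MvPolynomial (Fin r) k) (SRRing k r) :=
  (srStructureMap k r).toRingHom.toAlgebra

/-!
STATEMENT 16: The Stanley–Reisner ring `A = k[u,v]/(u₁v₁,…,u_rv_r)`, regarded as a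
module over `R = k[x₁,…,x_r]` via `x_i ↦ u_i − v_i`, is a free `R`-module with basis
the images of the `2^r` square-free monomials `u_I = ∏_{i∈I} u_i`, `I ⊆ {1,…,r}`;
in particular `A ≅ R^{2^r}` as `R`-modules.
-/

set_option synthInstance.maxHeartbeats 400000

section Aux

variable (k : Type) [Field k] (r : ℕ)

open MvPolynomial

/-- The candidate basis vectors: images of square-free monomials in the `u`s. -/
noncomputable def srB (s : Finset (Fin r)) : SRRing k r :=
  Ideal.Quotient.mk (srIdeal k r) (∏ i ∈ s, MvPolynomial.X (Sum.inl i))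

lemma srSmul_def (p : MvPolynomial (Fin r) k) (x : SRRing k r) :
    p • x = srStructureMap k r p * x := rfl

lemma sr_uv (i : Fin r) :
    Ideal.Quotient.mk (srIdeal k r) (X (Sum.inl i) * X (Sum.inr i) :
      MvPolynomial (Fin r ⊕ Fin r) k) = 0 := by
  rw [Ideal.Quotient.eq_zero_iff_mem, srIdeal]
  exact Ideal.subset_span ⟨i, rfl⟩

lemma sr_v_mul_srB (i : Fin r) (s : Finset (Fin r)) (hi : i ∈ s) :
    Ideal.Quotient.mk (srIdeal k r) (X (Sum.inr i)) * srB k r s = 0 := by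
  rw [srB, ← map_mul, ← Finset.mul_prod_erase s _ hi, Ideal.Quotient.eq_zero_iff_mem]
  have hgen : (X (Sum.inl i) * X (Sum.inr i) : MvPolynomial (Fin r ⊕ Fin r) k)
      ∈ srIdeal k r := Ideal.subset_span ⟨i, rfl⟩
  have := Ideal.mul_mem_right (∏ j ∈ s.erase i, X (Sum.inl j)) _ hgen
  convert this using 1
  ring

lemma sr_structure_X (i : Fin r) :
    srStructureMap k r (X i) =
      Ideal.Quotient.mk (srIdeal k r) (X (Sum.inl i)) -
        Ideal.Quotient.mk (srIdeal k r) (X (Sum.inr i)) := by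
  simp [srStructureMap]

lemma sr_u_mul_srB (i : Fin r) (s : Finset (Fin r)) (hi : i ∈ s) :
    Ideal.Quotient.mk (srIdeal k r) (X (Sum.inl i)) * srB k r s =
      (X i : MvPolynomial (Fin r) k) • srB k r s := by
  rw [srSmul_def, sr_structure_X, sub_mul, sr_v_mul_srB k r i s hi, sub_zero]

lemma sr_u_mul_srB' (i : Fin r) (s : Finset (Fin r)) (hi : i ∉ s) :
    Ideal.Quotient.mk (srIdeal k r) (X (Sum.inl i)) * srB k r s =
      srB k r (insert i s) := by
  rw [srB, srB, ← map_mul, Finset.prod_insert hi]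

end Aux

section Aux2

variable (k : Type) [Field k] (r : ℕ)

open MvPolynomial

lemma sr_mul_gen_mem (j : Fin r ⊕ Fin r) (x : SRRing k r)
    (hx : x ∈ Submodule.span (MvPolynomial (Fin r) k) (Set.range (srB k r))) :
    x * Ideal.Quotient.mk (srIdeal k r) (X j) ∈
      Submodule.span (MvPolynomial (Fin r) k) (Set.range (srB k r)) := by
  induction hx using Submodule.span_induction with
  | mem y hy =>
    obtain ⟨s, rfl⟩ := hy
    rw [mul_comm]
    cases j with
    | inl i =>
      by_cases hi : i ∈ s
      · rw [sr_u_mul_srB k r i s hi]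
        exact Submodule.smul_mem _ _ (Submodule.subset_span ⟨s, rfl⟩)
      · rw [sr_u_mul_srB' k r i s hi]
        exact Submodule.subset_span ⟨insert i s, rfl⟩
    | inr i =>
      by_cases hi : i ∈ s
      · rw [sr_v_mul_srB k r i s hi]
        exact Submodule.zero_mem _
      · have hv : Ideal.Quotient.mk (srIdeal k r) (X (Sum.inr i)) =
            Ideal.Quotient.mk (srIdeal k r) (X (Sum.inl i)) -
              srStructureMap k r (X i) := by
          rw [sr_structure_X]; ring
        rw [hv, sub_mul, sr_u_mul_srB' k r i s hi, ← srSmul_def]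
        exact Submodule.sub_mem _ (Submodule.subset_span ⟨insert i s, rfl⟩)
          (Submodule.smul_mem _ _ (Submodule.subset_span ⟨s, rfl⟩))
  | zero => rw [zero_mul]; exact Submodule.zero_mem _
  | add y z _ _ hy hz => rw [add_mul]; exact Submodule.add_mem _ hy hz
  | smul a y _ hy => rw [smul_mul_assoc]; exact Submodule.smul_mem _ _ hy

lemma sr_span_top :
    Submodule.span (MvPolynomial (Fin r) k) (Set.range (srB k r)) = ⊤ := by
  rw [eq_top_iff]
  rintro x -
  obtain ⟨p, rfl⟩ := Ideal.Quotient.mk_surjective (I := srIdeal k r) x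
  induction p using MvPolynomial.induction_on with
  | C a =>
    have h1 : Ideal.Quotient.mk (srIdeal k r) (C a) =
        (C a : MvPolynomial (Fin r) k) • srB k r ∅ := by
      rw [srSmul_def, srB, Finset.prod_empty, map_one, mul_one]
      simp [srStructureMap]
      rfl
    rw [h1]
    exact Submodule.smul_mem _ _ (Submodule.subset_span ⟨∅, rfl⟩)
  | add p q hp hq => rw [RingHom.map_add]; exact Submodule.add_mem _ hp hq
  | mul_X p j hp => rw [RingHom.map_mul]; exact sr_mul_gen_mem k r j _ hp

end Aux2

section Aux3

variable (k : Type) [Field k] (r : ℕ)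

open MvPolynomial

/-- Evaluation `u_i ↦ X i` or `0`, `v_i ↦ 0` or `-X i` depending on membership in `J`. -/
noncomputable def srPhi (J : Finset (Fin r)) :
    MvPolynomial (Fin r ⊕ Fin r) k →ₐ[k] MvPolynomial (Fin r) k :=
  MvPolynomial.aeval (Sum.elim
    (fun i => if i ∈ J then MvPolynomial.X i else 0)
    (fun i => if i ∈ J then 0 else -MvPolynomial.X i))

lemma srPhi_vanish (J : Finset (Fin r)) :
    ∀ a ∈ srIdeal k r, srPhi k r J a = 0 := by
  intro a ha
  have hle : srIdeal k r ≤ RingHom.ker (srPhi k r J).toRingHom := by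
    rw [srIdeal, Ideal.span_le]
    rintro y ⟨i, rfl⟩
    simp only [SetLike.mem_coe, RingHom.mem_ker, AlgHom.toRingHom_eq_coe,
      RingHom.coe_coe, map_mul]
    by_cases hi : i ∈ J <;> simp [srPhi, hi]
  exact hle ha

noncomputable def srLift (J : Finset (Fin r)) :
    SRRing k r →ₐ[k] MvPolynomial (Fin r) k :=
  Ideal.Quotient.liftₐ (srIdeal k r) (srPhi k r J) (srPhi_vanish k r J)

lemma srLift_mk (J : Finset (Fin r)) (p : MvPolynomial (Fin r ⊕ Fin r) k) :
    srLift k r J (Ideal.Quotient.mk (srIdeal k r) p) = srPhi k r J p := by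
  simp [srLift]
  exact Ideal.Quotient.lift_mk _ _ _

lemma srLift_structure (J : Finset (Fin r)) (p : MvPolynomial (Fin r) k) :
    srLift k r J (srStructureMap k r p) = p := by
  have h : (srLift k r J).comp (srStructureMap k r) =
      AlgHom.id k (MvPolynomial (Fin r) k) := by
    apply MvPolynomial.algHom_ext
    intro i
    rw [AlgHom.comp_apply, sr_structure_X, AlgHom.id_apply, map_sub,
      srLift_mk, srLift_mk]
    by_cases hi : i ∈ J <;> simp [srPhi, hi]
  calc srLift k r J (srStructureMap k r p)
      = ((srLift k r J).comp (srStructureMap k r)) p := rfl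
    _ = p := by rw [h]; rfl

/-- `srLift` as an `R`-linear map. -/
noncomputable def srPsi (J : Finset (Fin r)) :
    SRRing k r →ₗ[MvPolynomial (Fin r) k] MvPolynomial (Fin r) k where
  toFun := srLift k r J
  map_add' := map_add _
  map_smul' := by
    intro p x
    show srLift k r J (p • x) = RingHom.id (MvPolynomial (Fin r) k) p • srLift k r J x
    rw [srSmul_def, map_mul, srLift_structure, RingHom.id_apply, smul_eq_mul]

lemma srPsi_srB (J s : Finset (Fin r)) :
    srPsi k r J (srB k r s) =
      if s ⊆ J then ∏ i ∈ s, (MvPolynomial.X i : MvPolynomial (Fin r) k) else 0 := by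
  show srLift k r J (srB k r s) = _
  rw [srB, srLift_mk]
  rw [srPhi, map_prod]
  by_cases hs : s ⊆ J
  · rw [if_pos hs]
    exact Finset.prod_congr rfl fun i hi => by simp [hs hi]
  · rw [if_neg hs]
    obtain ⟨i, hi, hiJ⟩ := Finset.not_subset.mp hs
    exact Finset.prod_eq_zero hi (by simp [hiJ])

lemma srB_li : LinearIndependent (MvPolynomial (Fin r) k) (srB k r) := by
  rw [linearIndependent_iff]
  intro l hl
  have E : ∀ J : Finset (Fin r), ∑ s ∈ l.support,
      (if s ⊆ J then l s * ∏ i ∈ s, (MvPolynomial.X i : MvPolynomial (Fin r) k)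
        else 0) = 0 := by
    intro J
    have h0 := congrArg (srPsi k r J) hl
    rw [map_zero, Finsupp.linearCombination_apply, Finsupp.sum, map_sum] at h0
    calc _ = ∑ s ∈ l.support, srPsi k r J (l s • srB k r s) := by
            refine Finset.sum_congr rfl fun s _ => ?_
            rw [map_smul, srPsi_srB, smul_eq_mul, mul_ite, mul_zero]
      _ = 0 := h0
  refine Finsupp.ext fun J => ?_
  rw [Finsupp.coe_zero, Pi.zero_apply]
  induction J using Finset.strongInduction with
  | _ J ih =>
    by_cases hJ : J ∈ l.support
    · have hE := E J
      rw [Finset.sum_eq_single J (fun s hs hne => ?_) (fun h => absurd hJ h)] at hE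
      · rw [if_pos (subset_refl J)] at hE
        have hm : (∏ i ∈ J, (MvPolynomial.X i : MvPolynomial (Fin r) k)) ≠ 0 :=
          Finset.prod_ne_zero_iff.mpr fun i _ => MvPolynomial.X_ne_zero i
        exact (mul_eq_zero.mp hE).resolve_right hm
      · by_cases hsJ : s ⊆ J
        · rw [if_pos hsJ, ih s (Finset.ssubset_iff_subset_ne.mpr ⟨hsJ, hne⟩), zero_mul]
        · rw [if_neg hsJ]
    · exact Finsupp.notMem_support_iff.mp hJ

end Aux3

noncomputable def srBasis (k : Type) [Field k] (r : ℕ) :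
    Module.Basis (Finset (Fin r)) (MvPolynomial (Fin r) k) (SRRing k r) :=
  Module.Basis.mk (srB_li k r) (sr_span_top k r).ge


theorem stmt16 (k : Type) [Field k] (r : ℕ) (hr : 1 ≤ r) :
    (∃ B : Module.Basis (Finset (Fin r)) (MvPolynomial (Fin r) k) (SRRing k r),
      ∀ s : Finset (Fin r),
        B s = Ideal.Quotient.mk (srIdeal k r)
          (∏ i ∈ s, MvPolynomial.X (Sum.inl i))) ∧
    Nonempty (SRRing k r ≃ₗ[MvPolynomial (Fin r) k]
      (Fin (2 ^ r) → MvPolynomial (Fin r) k)) := by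
  refine ⟨⟨srBasis k r, fun s => by rw [srBasis, Module.Basis.mk_apply]; rfl⟩, ⟨?_⟩⟩
  have e : Fin (2 ^ r) ≃ Finset (Fin r) :=
    (Fintype.equivFinOfCardEq (by simp)).symm
  exact (srBasis k r).equivFun.trans (LinearEquiv.funCongrLeft _ _ e)
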